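/- The conformal control iteration achieves long-run coverage: if in addition h is sublinear, i.e. h(T)/T → 0 as T → ∞, then the empirical miscoverage converges to the target level, (1/T)·Σ_{t=1}^T err_t → α as T → ∞, for any choice of the quantile forecaster q̂ and any saturation functions r_t satisfying the stated conditions. -/

import Mathlib

open Finset

/-- Conformal control (PID) iteration context:
`err t = 1{s t > q t}`, integrator `E t = ∑_{i=1}^t (err i - α)` with `E 0 = 0`,
and iterates `q t = q̂ t + r (t-1) (E (t-1))` for `t ≥ 1`. -/
theorem conformal_stmt_5
    (α M : ℝ) (hα0 : 0 < α) (hα1 : α < 1) (hM : 0 ≤ M)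
    (s qhat : ℕ → ℝ)
    (hs : ∀ t, 1 ≤ t → |s t| ≤ M) (hqhat : ∀ t, 1 ≤ t → |qhat t| ≤ M)
    (h : ℕ → ℝ) (hh0 : ∀ t, 0 ≤ h t) (hhmono : Monotone h)
    (c b : ℝ) (hc : 0 ≤ c) (hb : 2 * M < b)
    (r : ℕ → ℝ → ℝ)
    (hrub : ∀ t x, c * h t ≤ x → b ≤ r t x)
    (hrlb : ∀ t x, x ≤ -(c * h t) → r t x ≤ -b)
    (err E q : ℕ → ℝ)
    (herr : ∀ t, 1 ≤ t → err t = if q t < s t then 1 else 0)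
    (hE0 : E 0 = 0)
    (hE : ∀ t, 1 ≤ t → E t = ∑ i ∈ Finset.Icc 1 t, (err i - α))
    (hq : ∀ t, 1 ≤ t → q t = qhat t + r (t - 1) (E (t - 1)))
    (hsub : Filter.Tendsto (fun T : ℕ => h T / (T : ℝ)) Filter.atTop (nhds 0)) :
    Filter.Tendsto (fun T : ℕ => (1 / (T : ℝ)) * ∑ t ∈ Finset.Icc 1 T, err t)
      Filter.atTop (nhds α) := by
  -- step formula
  have hstep : ∀ t : ℕ, E (t + 1) = E t + (err (t + 1) - α) := by
    intro t
    rcases Nat.eq_zero_or_pos t with rfl | ht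
    · rw [hE 1 le_rfl, hE0]; simp
    · rw [hE (t + 1) (by omega), hE t ht, Finset.sum_Icc_succ_top (by omega)]
  have herr01 : ∀ t, 1 ≤ t → 0 ≤ err t ∧ err t ≤ 1 := by
    intro t ht
    rw [herr t ht]
    split <;> norm_num
  -- key bound
  have key : ∀ t : ℕ, |E t| ≤ c * h t + 1 := by
    intro t
    induction t with
    | zero =>
      rw [hE0]
      simp only [abs_zero]
      nlinarith [hh0 0]
    | succ n ih =>
      have hch : c * h n ≤ c * h (n + 1) := by
        have := hhmono (Nat.le_succ n)
        nlinarith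
      rw [hstep n, abs_le] at *
      constructor
      · by_cases hlo : E n ≤ -(c * h n)
        · -- err (n+1) = 1
          have hr : r n (E n) ≤ -b := hrlb n (E n) hlo
          have hq1 : q (n + 1) = qhat (n + 1) + r n (E n) := by
            have := hq (n + 1) (by omega); simpa using this
          have hqlt : q (n + 1) < s (n + 1) := by
            have h1 := abs_le.mp (hqhat (n + 1) (by omega))
            have h2 := abs_le.mp (hs (n + 1) (by omega))
            rw [hq1]; nlinarith
          have he1 : err (n + 1) = 1 := by rw [herr (n + 1) (by omega), if_pos hqlt]
          rw [he1]; nlinarith [hh0 n]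
        · push_neg at hlo
          have := (herr01 (n + 1) (by omega)).1
          nlinarith
      · by_cases hhi : c * h n ≤ E n
        · -- err (n+1) = 0
          have hr : b ≤ r n (E n) := hrub n (E n) hhi
          have hq1 : q (n + 1) = qhat (n + 1) + r n (E n) := by
            have := hq (n + 1) (by omega); simpa using this
          have hqge : ¬ q (n + 1) < s (n + 1) := by
            have h1 := abs_le.mp (hqhat (n + 1) (by omega))
            have h2 := abs_le.mp (hs (n + 1) (by omega))
            rw [hq1]; push_neg; nlinarith
          have he0 : err (n + 1) = 0 := by rw [herr (n + 1) (by omega), if_neg hqge]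
          rw [he0]; nlinarith
        · push_neg at hhi
          have := (herr01 (n + 1) (by omega)).2
          nlinarith
  -- E T / T → 0
  have hET : Filter.Tendsto (fun T : ℕ => E T / (T : ℝ)) Filter.atTop (nhds 0) := by
    have hbound : Filter.Tendsto (fun T : ℕ => c * (h T / (T : ℝ)) + 1 / (T : ℝ))
        Filter.atTop (nhds 0) := by
      have h1 := hsub.const_mul c
      have h2 : Filter.Tendsto (fun n : ℕ => 1 / (n : ℝ)) Filter.atTop (nhds 0) := tendsto_one_div_atTop_nhds_zero_nat
      have := h1.add h2
      simpa using this
    apply squeeze_zero_norm' ?_ hbound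
    filter_upwards [Filter.eventually_ge_atTop 1] with T hT
    have hTpos : (0 : ℝ) < T := by exact_mod_cast hT
    rw [Real.norm_eq_abs, abs_div, abs_of_pos hTpos, div_le_iff₀ hTpos]
    have := key T
    calc |E T| ≤ c * h T + 1 := this
      _ = (c * (h T / T) + 1 / T) * T := by field_simp
  -- conclude
  have heq : ∀ᶠ T : ℕ in Filter.atTop,
      E T / (T : ℝ) + α = (1 / (T : ℝ)) * ∑ t ∈ Finset.Icc 1 T, err t := by
    filter_upwards [Filter.eventually_ge_atTop 1] with T hT
    have hTpos : (0 : ℝ) < T := by exact_mod_cast hT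
    rw [hE T hT, Finset.sum_sub_distrib, Finset.sum_const]
    rw [Nat.card_Icc]
    simp only [Nat.add_sub_cancel, nsmul_eq_mul]
    field_simp
    ring
  have := (hET.add_const α).congr' heq
  simpa using this
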